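/- (Hardy–Littlewood–Pólya) For w, w' ∈ ℝ^d, w' is majorized by w if and only if there exists a doubly stochastic d×d matrix M with w' = M w. -/

import Mathlib

/-- The vector `v` with entries sorted in decreasing order. -/
noncomputable def sortDesc {d : ℕ} (v : Fin d → ℝ) : Fin d → ℝ :=
  fun i => v (Tuple.sort (fun j => -v j) i)

/-- Sum of the `k` largest entries of `v`. -/
noncomputable def psum {d : ℕ} (v : Fin d → ℝ) (k : ℕ) : ℝ :=
  ∑ i ∈ Finset.univ.filter (fun i : Fin d => (i : ℕ) < k), sortDesc v i

/-- `v ≺ w` : `v` is majorized by `w`. -/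
def Majorizes {d : ℕ} (v w : Fin d → ℝ) : Prop :=
  (∀ k : ℕ, k ≤ d → psum v k ≤ psum w k) ∧ ∑ i, v i = ∑ i, w i

/-- `M` is a doubly stochastic matrix. -/
def DoublyStochastic {d : ℕ} (M : Matrix (Fin d) (Fin d) ℝ) : Prop :=
  (∀ i j, 0 ≤ M i j) ∧ (∀ i, ∑ j, M i j = 1) ∧ (∀ j, ∑ i, M i j = 1)

namespace HLP

open Finset

variable {d : ℕ}

/-- The sorting permutation. -/
noncomputable def sp (v : Fin d → ℝ) : Equiv.Perm (Fin d) := Tuple.sort (fun j => -v j)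

lemma sortDesc_apply (v : Fin d → ℝ) (i : Fin d) : sortDesc v i = v (sp v i) := rfl

lemma sortDesc_antitone (v : Fin d → ℝ) : Antitone (sortDesc v) := by
  intro i j hij
  have h := Tuple.monotone_sort (fun j => -v j) hij
  simpa [sortDesc, sp] using neg_le_neg_iff.mp h

lemma sum_sortDesc (v : Fin d → ℝ) : ∑ i, sortDesc v i = ∑ i, v i :=
  Equiv.sum_comp (sp v) v

lemma card_filter_lt {k : ℕ} (hk : k ≤ d) :
    (univ.filter fun i : Fin d => (i : ℕ) < k).card = k := by
  have : (univ.filter fun i : Fin d => (i : ℕ) < k)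
      = Finset.map (Fin.castLEEmb hk) univ := by
    ext i
    constructor
    · intro hi
      simp only [mem_filter, mem_univ, true_and] at hi
      exact mem_map.mpr ⟨⟨i, hi⟩, mem_univ _, rfl⟩
    · intro hi
      obtain ⟨j, -, rfl⟩ := mem_map.mp hi
      simp [Fin.castLEEmb, j.isLt]
  rw [this, card_map, card_univ, Fintype.card_fin]

lemma psum_d (v : Fin d → ℝ) : psum v d = ∑ i, v i := by
  rw [psum, filter_true_of_mem (fun i _ => i.isLt), sum_sortDesc]

lemma psum_zero (v : Fin d → ℝ) : psum v 0 = 0 := by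
  simp [psum]

end HLP
namespace HLP
open Finset
variable {d : ℕ}

lemma telescope (f : ℕ → ℝ) {a b : ℕ} (h : a ≤ b) :
    ∑ k ∈ Ico a b, (f k - f (k + 1)) = f a - f b := by
  induction b, h using Nat.le_induction with
  | base => simp
  | succ b hb ih => rw [Finset.sum_Ico_succ_top hb, ih]; ring

/-- unsorted partial sum -/
noncomputable def Ps (u : Fin d → ℝ) (k : ℕ) : ℝ :=
  ∑ i ∈ univ.filter (fun i : Fin d => (i : ℕ) < k), u i

lemma psum_eq (v : Fin d → ℝ) (k : ℕ) : psum v k = Ps (sortDesc v) k := rfl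

/-- coefficients as ℕ-indexed function -/
noncomputable def cc (c : Fin d → ℝ) (k : ℕ) : ℝ := if h : k < d then c ⟨k, h⟩ else 0

lemma abel (c u : Fin d → ℝ) :
    ∑ i, c i * u i = ∑ k ∈ range d, (cc c k - cc c (k + 1)) * Ps u (k + 1) := by
  have h1 : ∀ k, (cc c k - cc c (k + 1)) * Ps u (k + 1)
      = ∑ i : Fin d, if (i : ℕ) ≤ k then (cc c k - cc c (k + 1)) * u i else 0 := by
    intro k
    rw [Ps, mul_sum, sum_filter]
    congr 1; ext i
    simp [Nat.lt_succ_iff]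
  calc ∑ i, c i * u i = ∑ i : Fin d, ∑ k ∈ range d,
        (if (i : ℕ) ≤ k then (cc c k - cc c (k + 1)) * u i else 0) := by
        refine Finset.sum_congr rfl fun i _ => ?_
        rw [← Finset.sum_filter]
        have hf : (range d).filter (fun k => (i : ℕ) ≤ k) = Ico (i : ℕ) d := by
          ext k; simp [Finset.mem_filter, Finset.mem_Ico, and_comm]
        rw [hf, ← Finset.sum_mul, telescope (cc c) (le_of_lt i.isLt)]
        have : cc c (i : ℕ) = c i := by simp [cc, i.isLt]
        have h2 : cc c d = 0 := by simp [cc]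
        rw [this, h2, sub_zero]
    _ = ∑ k ∈ range d, (cc c k - cc c (k + 1)) * Ps u (k + 1) := by
        rw [Finset.sum_comm]
        exact Finset.sum_congr rfl fun k _ => (h1 k).symm

/-- Key inequality: antitone weights against majorization. -/
lemma sum_mul_sortDesc_le (c : Fin d → ℝ) (hc : Antitone c) {v w : Fin d → ℝ}
    (h : Majorizes v w) :
    ∑ i, c i * sortDesc v i ≤ ∑ i, c i * sortDesc w i := by
  rcases Nat.eq_zero_or_pos d with hd | hd
  · subst hd; simp
  obtain ⟨m, rfl⟩ : ∃ m, d = m + 1 := ⟨d - 1, (Nat.succ_pred_eq_of_pos hd).symm⟩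
  rw [abel c (sortDesc v), abel c (sortDesc w), Finset.sum_range_succ,
    Finset.sum_range_succ]
  have htot : Ps (sortDesc v) (m + 1) = Ps (sortDesc w) (m + 1) := by
    rw [← psum_eq, ← psum_eq, psum_d, psum_d]; exact h.2
  rw [htot]
  have key : ∀ k ∈ range m, (cc c k - cc c (k + 1)) * Ps (sortDesc v) (k + 1)
      ≤ (cc c k - cc c (k + 1)) * Ps (sortDesc w) (k + 1) := by
    intro k hk
    rw [Finset.mem_range] at hk
    have hco : 0 ≤ cc c k - cc c (k + 1) := by
      have h1 : k < m + 1 := by omega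
      have h2 : k + 1 < m + 1 := by omega
      simp only [cc, dif_pos h1, dif_pos h2, sub_nonneg]
      exact hc (by simp [Fin.le_def])
    have hps : Ps (sortDesc v) (k + 1) ≤ Ps (sortDesc w) (k + 1) := by
      rw [← psum_eq, ← psum_eq]; exact h.1 (k + 1) (by omega)
    exact mul_le_mul_of_nonneg_left hps hco
  exact add_le_add (Finset.sum_le_sum key) le_rfl

end HLP
namespace HLP
open Finset
variable {d : ℕ}

lemma monovary_of_antitone (f g : Fin d → ℝ) (hf : Antitone f) (hg : Antitone g) :
    Monovary f g := by
  intro i j h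
  rcases le_total j i with hji | hij
  · exact hf hji
  · exact absurd (hg hij) (not_le.mpr h)

/-- Rearrangement: pairing sorted-vs-sorted dominates any pairing. -/
lemma sum_mul_le_sorted (c u : Fin d → ℝ) :
    ∑ i, c i * u i ≤ ∑ i, sortDesc c i * sortDesc u i := by
  have hmv : Monovary (sortDesc c) (sortDesc u) :=
    monovary_of_antitone _ _ (sortDesc_antitone c) (sortDesc_antitone u)
  have hre := hmv.sum_smul_comp_perm_le_sum_smul (σ := (sp c).trans (sp u)⁻¹)
  have he : ∑ i, sortDesc c i • sortDesc u (((sp c).trans (sp u)⁻¹) i)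
      = ∑ i, c i * u i := by
    have : ∀ i, sortDesc c i • sortDesc u (((sp c).trans (sp u)⁻¹) i)
        = c (sp c i) * u (sp c i) := by
      intro i
      simp [sortDesc_apply, smul_eq_mul, Equiv.trans_apply]
    rw [Finset.sum_congr rfl fun i _ => this i]
    exact Equiv.sum_comp (sp c) (fun j => c j * u j)
  calc ∑ i, c i * u i = _ := he.symm
    _ ≤ ∑ i, sortDesc c i • sortDesc u i := hre
    _ = ∑ i, sortDesc c i * sortDesc u i := by simp [smul_eq_mul]

/-- The sorted-sorted pairing is achieved by some permutation of `w`. -/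
lemma exists_perm_sorted_pairing (c w : Fin d → ℝ) :
    ∃ σ : Equiv.Perm (Fin d),
      ∑ i, sortDesc c i * sortDesc w i = ∑ j, c j * w (σ j) := by
  refine ⟨(sp c)⁻¹.trans (sp w), ?_⟩
  have : ∀ j : Fin d, c j * w (((sp c)⁻¹.trans (sp w)) j)
      = c j * w (sp w ((sp c)⁻¹ j)) := fun j => rfl
  rw [Finset.sum_congr rfl fun j _ => this j]
  rw [← Equiv.sum_comp (sp c) (fun j => c j * w (sp w ((sp c)⁻¹ j)))]
  refine Finset.sum_congr rfl fun i _ => ?_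
  simp [sortDesc_apply]

/-- Core of the easy direction. -/
lemma sum_mul_le_psum (v c : Fin d → ℝ) (k : ℕ) (hk : k ≤ d)
    (hc0 : ∀ i, 0 ≤ c i) (hc1 : ∀ i, c i ≤ 1) (hcs : ∑ i, c i = (k : ℝ)) :
    ∑ i, c i * v i ≤ psum v k := by
  rcases Nat.eq_zero_or_pos k with rfl | hkpos
  · have : ∀ i ∈ Finset.univ, c i = 0 :=
      (Finset.sum_eq_zero_iff_of_nonneg (fun i _ => hc0 i)).mp (by simpa using hcs)
    rw [psum_zero]
    rw [Finset.sum_congr rfl fun i hi => by rw [this i hi, zero_mul]]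
    simp
  obtain ⟨m, rfl⟩ : ∃ m, k = m + 1 := ⟨k - 1, (Nat.succ_pred_eq_of_pos hkpos).symm⟩
  have hm : m < d := hk
  set t := sortDesc v ⟨m, hm⟩ with ht
  have key : ∀ i, c i * v i ≤ max (v i - t) 0 + c i * t := by
    intro i
    rcases le_total t (v i) with h | h
    · have h1 : c i * v i = c i * (v i - t) + c i * t := by ring
      rw [h1]
      have : c i * (v i - t) ≤ v i - t := by
        nlinarith [hc0 i, hc1 i]
      exact add_le_add (this.trans (le_max_left _ _)) le_rfl
    · have : c i * v i ≤ c i * t := mul_le_mul_of_nonneg_left h (hc0 i)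
      have h0 : (0 : ℝ) ≤ max (v i - t) 0 := le_max_right _ _
      linarith
  have hsum : ∑ i, c i * v i ≤ ∑ i : Fin d, (max (v i - t) 0 + c i * t) :=
    Finset.sum_le_sum fun i _ => key i
  rw [Finset.sum_add_distrib, ← Finset.sum_mul, hcs] at hsum
  -- now compute ∑ i, max (v i - t) 0
  have hmax : ∑ i : Fin d, max (v i - t) 0 = psum v (m + 1) - (m + 1 : ℝ) * t := by
    rw [← Equiv.sum_comp (sp v) (fun x => max (v x - t) 0)]
    have hsplit : ∀ i : Fin d, max (v (sp v i) - t) 0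
        = if (i : ℕ) < m + 1 then sortDesc v i - t else 0 := by
      intro i
      have hdef : v ((sp v) i) = sortDesc v i := rfl
      rw [hdef]
      by_cases hi : (i : ℕ) < m + 1
      · have hle : i ≤ (⟨m, hm⟩ : Fin d) := by
          exact Fin.le_def.mpr (show (i : ℕ) ≤ m by omega)
        have := sortDesc_antitone v hle
        rw [if_pos hi, max_eq_left (by rw [← ht] at this; linarith)]
      · have hge : (⟨m, hm⟩ : Fin d) ≤ i := by
          exact Fin.le_def.mpr (show m ≤ (i : ℕ) by omega)
        have := sortDesc_antitone v hge
        rw [if_neg hi, max_eq_right (by rw [← ht] at this; linarith)]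
    rw [Finset.sum_congr rfl fun i _ => hsplit i, ← Finset.sum_filter]
    rw [Finset.sum_sub_distrib, Finset.sum_const, card_filter_lt hk, ← psum]
    ring
  rw [hmax] at hsum
  push_cast at hsum ⊢
  linarith

end HLP
namespace HLP
open Finset
variable {d : ℕ}

lemma of_doublyStochastic (M : Matrix (Fin d) (Fin d) ℝ) (hM : DoublyStochastic M)
    (w : Fin d → ℝ) : Majorizes (M.mulVec w) w := by
  obtain ⟨h0, hrow, hcol⟩ := hM
  have hmv : ∀ x : Fin d, M.mulVec w x = ∑ j, M x j * w j := by
    intro x; simp [Matrix.mulVec, dotProduct]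
  constructor
  · intro k hk
    set v := M.mulVec w with hv
    set F := univ.filter (fun i : Fin d => (i : ℕ) < k) with hF
    set c : Fin d → ℝ := fun j => ∑ i ∈ F, M (sp v i) j with hc
    have h1 : psum v k = ∑ j, c j * w j := by
      rw [psum]
      calc ∑ i ∈ F, sortDesc v i = ∑ i ∈ F, ∑ j, M (sp v i) j * w j := by
            exact Finset.sum_congr rfl fun i _ => by rw [sortDesc_apply, hmv]
        _ = ∑ j, ∑ i ∈ F, M (sp v i) j * w j := Finset.sum_comm
        _ = ∑ j, c j * w j := by
            exact Finset.sum_congr rfl fun j _ => by rw [hc, Finset.sum_mul]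
    rw [h1]
    apply sum_mul_le_psum w c k hk
    · intro j
      exact Finset.sum_nonneg fun i _ => h0 _ _
    · intro j
      have hinj : ∑ i ∈ F, M (sp v i) j = ∑ i' ∈ F.image (sp v), M i' j :=
        (Finset.sum_image (f := fun i' => M i' j) (g := ⇑(sp v)) (s := F)
          (fun x _ y _ hxy => (sp v).injective hxy)).symm
      rw [hc]
      simp only []
      rw [hinj]
      calc ∑ i' ∈ F.image (sp v), M i' j ≤ ∑ i' : Fin d, M i' j :=
            Finset.sum_le_sum_of_subset_of_nonneg (Finset.subset_univ _)
              (fun i _ _ => h0 i j)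
        _ = 1 := hcol j
    · calc ∑ j, c j = ∑ j, ∑ i ∈ F, M (sp v i) j := rfl
        _ = ∑ i ∈ F, ∑ j, M (sp v i) j := Finset.sum_comm
        _ = ∑ i ∈ F, (1 : ℝ) := Finset.sum_congr rfl fun i _ => hrow _
        _ = (k : ℝ) := by rw [Finset.sum_const, hF, card_filter_lt hk, nsmul_eq_mul, mul_one]
  · calc ∑ i, M.mulVec w i = ∑ i, ∑ j, M i j * w j :=
          Finset.sum_congr rfl fun i _ => hmv i
      _ = ∑ j, (∑ i, M i j) * w j := by
          rw [Finset.sum_comm]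
          exact Finset.sum_congr rfl fun j _ => (Finset.sum_mul _ _ _).symm
      _ = ∑ j, w j := Finset.sum_congr rfl fun j _ => by rw [hcol j, one_mul]

lemma to_matrix {w w' : Fin d → ℝ} (h : Majorizes w' w) :
    ∃ M : Matrix (Fin d) (Fin d) ℝ, DoublyStochastic M ∧ w' = M.mulVec w := by
  classical
  set S : Set (Fin d → ℝ) := Set.range (fun σ : Equiv.Perm (Fin d) => fun i => w (σ i))
    with hSdef
  have hSfin : S.Finite := Set.finite_range _
  have hmem : w' ∈ convexHull ℝ S := by
    by_contra hnot
    obtain ⟨f, u, hfa, hfu⟩ := geometric_hahn_banach_closed_point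
      (convex_convexHull (𝕜 := ℝ) (s := S)) (hSfin.isClosed_convexHull ℝ) hnot
    set c : Fin d → ℝ := fun i => f (Pi.single i 1) with hcdef
    have hfy : ∀ y : Fin d → ℝ, f y = ∑ i, c i * y i := by
      intro y
      have hy : y = ∑ i, y i • (Pi.single i (1 : ℝ) : Fin d → ℝ) := by
        funext j
        simp [Finset.sum_apply, Pi.single_apply]
      calc f y = f (∑ i, y i • (Pi.single i (1 : ℝ) : Fin d → ℝ)) := by rw [← hy]
        _ = ∑ i, y i • f (Pi.single i (1 : ℝ) : Fin d → ℝ) := by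
            rw [map_sum]
            exact Finset.sum_congr rfl fun i _ => by rw [map_smul]
        _ = ∑ i, c i * y i := Finset.sum_congr rfl fun i _ => by
            rw [hcdef, smul_eq_mul, mul_comm]
    obtain ⟨σ, hσ⟩ := exists_perm_sorted_pairing c w
    have h1 : f w' ≤ f (fun i => w (σ i)) := by
      rw [hfy, hfy]
      calc ∑ i, c i * w' i ≤ ∑ i, sortDesc c i * sortDesc w' i := sum_mul_le_sorted c w'
        _ ≤ ∑ i, sortDesc c i * sortDesc w i :=
            sum_mul_sortDesc_le (sortDesc c) (sortDesc_antitone c) h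
        _ = ∑ j, c j * w (σ j) := hσ
    have h2 : f (fun i => w (σ i)) < u :=
      hfa _ (subset_convexHull ℝ S ⟨σ, rfl⟩)
    linarith
  rw [mem_convexHull_iff_exists_fintype] at hmem
  obtain ⟨ι, hι, μ, z, hμ0, hμ1, hz, hx⟩ := hmem
  letI := hι
  choose τ hτ using hz
  refine ⟨fun i j => ∑ t, μ t * (if τ t i = j then 1 else 0), ⟨?_, ?_, ?_⟩, ?_⟩
  · intro i j
    refine Finset.sum_nonneg fun t _ => mul_nonneg (hμ0 t) ?_
    split <;> norm_num
  · intro i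
    rw [Finset.sum_comm]
    have hin : ∀ t : ι, (∑ j, μ t * (if τ t i = j then 1 else 0)) = μ t := by
      intro t; simp
    rw [Finset.sum_congr rfl fun t _ => hin t]
    exact hμ1
  · intro j
    rw [Finset.sum_comm]
    have hin : ∀ t : ι, (∑ i, μ t * (if τ t i = j then 1 else 0)) = μ t := by
      intro t
      have : ∀ i : Fin d, (τ t i = j) = (i = (τ t)⁻¹ j) := by
        intro i
        simp [Equiv.apply_eq_iff_eq_symm_apply, Equiv.Perm.inv_def]
      simp only [this]
      simp
    rw [Finset.sum_congr rfl fun t _ => hin t]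
    exact hμ1
  · funext i
    have hxi : (∑ t, μ t • z t) i = w' i := congrFun hx i
    have hz1 : w' i = ∑ t, μ t * z t i := by
      rw [← hxi]
      simp [Finset.sum_apply]
    have hz2 : ∀ t : ι, z t i = w (τ t i) := fun t => (congrFun (hτ t) i).symm
    have hmv : Matrix.mulVec (fun i j => ∑ t, μ t * (if τ t i = j then 1 else 0)) w i
        = ∑ j, (∑ t, μ t * (if τ t i = j then 1 else 0)) * w j := by
      simp [Matrix.mulVec, dotProduct]
    rw [hmv, hz1]
    calc ∑ t, μ t * z t i = ∑ t, μ t * w (τ t i) :=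
          Finset.sum_congr rfl fun t _ => by rw [hz2 t]
      _ = ∑ t, ∑ j, (μ t * (if τ t i = j then 1 else 0)) * w j := by
          refine Finset.sum_congr rfl fun t _ => ?_
          simp
      _ = ∑ j, (∑ t, μ t * (if τ t i = j then 1 else 0)) * w j := by
          rw [Finset.sum_comm]
          exact Finset.sum_congr rfl fun j _ => (Finset.sum_mul _ _ _).symm

end HLP

/-- Hardy–Littlewood–Pólya: `w' ≺ w` iff `w' = M w` for some doubly stochastic `M`. -/
theorem hardy_littlewood_polya {d : ℕ} (w w' : Fin d → ℝ) :
    Majorizes w' w ↔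
      ∃ M : Matrix (Fin d) (Fin d) ℝ, DoublyStochastic M ∧ w' = M.mulVec w := by
  constructor
  · exact fun h => HLP.to_matrix h
  · rintro ⟨M, hM, rfl⟩
    exact HLP.of_doublyStochastic M hM w
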